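/- (Theorem 1, architectural robustness of the multi-scale flow.) Let n ≥ 1, k ≥ 0 be natural numbers, and for each i ∈ {1,…,k} let mᵢ, dᵢ ≥ 1 be natural numbers. Let δ ≥ 0, L₁, L₂ ≥ 0, b > 0 be real numbers. Let x, x⋆ ∈ EuclideanSpace ℝ (Fin n) with ‖x − x⋆‖₂ ≤ δ. For each i, let Yᵢ : EuclideanSpace ℝ (Fin n) → EuclideanSpace ℝ (Fin mᵢ) and Zᵢ : EuclideanSpace ℝ (Fin n) → EuclideanSpace ℝ (Fin dᵢ) be 1-Lipschitz maps, and let μᵢ, σᵢ : EuclideanSpace ℝ (Fin mᵢ) → EuclideanSpace ℝ (Fin dᵢ) be L₂-Lipschitz maps satisfying, for u ∈ {x, x⋆} and all components j: |Zᵢ(u)ⱼ| ≤ b, |μᵢ(Yᵢ(u))ⱼ| ≤ b, and σᵢ(Yᵢ(u))ⱼ ≥ 1/b. Let M : EuclideanSpace ℝ (Fin n) → EuclideanSpace ℝ (Fin d) be an L₁-Lipschitz map (the main-flow). Define the negative log-likelihood NLL(u) = ∑_{i=1}^{k} [ −ℓ(Zᵢ(u); μᵢ(Yᵢ(u)), σᵢ(Yᵢ(u)))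 ] + ‖M(u)‖₂²/2 + (d/2)·log(2π). Then NLL(x⋆) − NLL(x) ≤ ∑_{i=1}^{k} δ·√(dᵢ)·( L₂·((2b)²·b³ + 2b·b² + b) + 2b·b² ) + L₁·δ·‖M(x)‖₂ + L₁²·δ²/2. -/
import Mathlib
set_option maxHeartbeats 1000000


/-- The diagonal-Gaussian log-density
`ℓ(z; μ, s) = −(d/2)·log(2π) − ∑ⱼ log sⱼ − ∑ⱼ (zⱼ − μⱼ)²/(2 sⱼ²)`. -/
noncomputable def gaussLogDensity (d : ℕ) (z μ s : Fin d → ℝ) : ℝ :=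
  -((d : ℝ) / 2) * Real.log (2 * Real.pi) - ∑ j, Real.log (s j)
    - ∑ j, (z j - μ j) ^ 2 / (2 * (s j) ^ 2)


lemma sum_abs_le_sqrt_mul_norm {d : ℕ} (a : EuclideanSpace ℝ (Fin d)) :
    ∑ j, |a j| ≤ Real.sqrt d * ‖a‖ := by
  have h1 : ‖a‖ = Real.sqrt (∑ j, (a j) ^ 2) := by
    rw [EuclideanSpace.norm_eq]
    simp [Real.norm_eq_abs, sq_abs]
  rw [h1, ← Real.sqrt_mul (by positivity)]
  rw [Real.le_sqrt (by positivity) (by positivity)]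
  have := sq_sum_le_card_mul_sum_sq (s := (Finset.univ : Finset (Fin d)))
    (f := fun j => |a j|)
  simpa [sq_abs] using this

lemma coord_bound (b z z' μ μ' s s' : ℝ) (hb : 0 < b)
    (hz : |z| ≤ b) (hz' : |z'| ≤ b) (hμ : |μ| ≤ b) (hμ' : |μ'| ≤ b)
    (hs : 1 / b ≤ s) (hs' : 1 / b ≤ s') :
    (Real.log s' + (z' - μ') ^ 2 / (2 * s' ^ 2))
      - (Real.log s + (z - μ) ^ 2 / (2 * s ^ 2))
    ≤ ((2 * b) ^ 2 * b ^ 3 + b) * |s' - s| + 2 * b * b ^ 2 * (|μ' - μ| + |z' - z|) := by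
  have hbinv : 0 < 1 / b := by positivity
  have hs0 : 0 < s := lt_of_lt_of_le hbinv hs
  have hs0' : 0 < s' := lt_of_lt_of_le hbinv hs'
  have hbs : 1 ≤ b * s := by rw [div_le_iff₀ hb] at hs; linarith
  have hbs' : 1 ≤ b * s' := by rw [div_le_iff₀ hb] at hs'; linarith
  have hinvs : 1 / s ≤ b := by rw [div_le_iff₀ hs0]; linarith
  have hinvs' : 1 / s' ≤ b := by rw [div_le_iff₀ hs0']; linarith
  -- log part
  have hlog : Real.log s' - Real.log s ≤ b * |s' - s| := by
    have h1 : Real.log s' - Real.log s = Real.log (s' / s) := by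
      rw [Real.log_div (ne_of_gt hs0') (ne_of_gt hs0)]
    have h2 : Real.log (s' / s) ≤ s' / s - 1 :=
      Real.log_le_sub_one_of_pos (by positivity)
    have h3 : s' / s - 1 = (s' - s) * (1 / s) := by field_simp
    have h4 : (s' - s) * (1 / s) ≤ |s' - s| * (1 / s) :=
      mul_le_mul_of_nonneg_right (le_abs_self _) (by positivity)
    have h5 : |s' - s| * (1 / s) ≤ |s' - s| * b :=
      mul_le_mul_of_nonneg_left hinvs (abs_nonneg _)
    rw [h1]
    calc Real.log (s' / s) ≤ s' / s - 1 := h2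
      _ = (s' - s) * (1 / s) := h3
      _ ≤ |s' - s| * b := le_trans h4 h5
      _ = b * |s' - s| := by ring
  -- quadratic part
  have hq : (z' - μ') ^ 2 / (2 * s' ^ 2) - (z - μ) ^ 2 / (2 * s ^ 2)
      ≤ (2 * b) ^ 2 * b ^ 3 * |s' - s| + 2 * b * b ^ 2 * (|μ' - μ| + |z' - z|) := by
    have hid : (z' - μ') ^ 2 / (2 * s' ^ 2) - (z - μ) ^ 2 / (2 * s ^ 2)
        = (z' - μ') ^ 2 * (1 / (2 * s' ^ 2) - 1 / (2 * s ^ 2))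
          + ((z' - μ') ^ 2 - (z - μ) ^ 2) / (2 * s ^ 2) := by
      field_simp; ring
    -- term 1
    have hzμ' : (z' - μ') ^ 2 ≤ (2 * b) ^ 2 := by
      have : |z' - μ'| ≤ 2 * b := by
        calc |z' - μ'| ≤ |z'| + |μ'| := abs_sub _ _
          _ ≤ 2 * b := by linarith
      calc (z' - μ') ^ 2 = |z' - μ'| ^ 2 := (sq_abs _).symm
        _ ≤ (2 * b) ^ 2 := by nlinarith [abs_nonneg (z' - μ')]
    have hA : |1 / (2 * s' ^ 2) - 1 / (2 * s ^ 2)| ≤ b ^ 3 * |s' - s| := by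
      have hrw : 1 / (2 * s' ^ 2) - 1 / (2 * s ^ 2)
          = (s - s') * ((s + s') / (2 * s ^ 2 * s' ^ 2)) := by
        field_simp; ring
      rw [hrw, abs_mul]
      have hpos : 0 ≤ (s + s') / (2 * s ^ 2 * s' ^ 2) := by positivity
      rw [abs_of_nonneg hpos]
      have hfac : (s + s') / (2 * s ^ 2 * s' ^ 2) ≤ b ^ 3 := by
        rw [div_le_iff₀ (by positivity)]
        nlinarith [mul_pos hs0 hs0', sq_nonneg (b * s - 1), sq_nonneg (b * s' - 1),
          mul_pos (mul_pos hs0 hs0) hs0', mul_pos hs0 (mul_pos hs0' hs0'),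
          mul_le_mul hbs hbs' (by norm_num) (le_of_lt (mul_pos hb hs0))]
      calc |s - s'| * ((s + s') / (2 * s ^ 2 * s' ^ 2)) ≤ |s - s'| * b ^ 3 :=
            mul_le_mul_of_nonneg_left hfac (abs_nonneg _)
        _ = b ^ 3 * |s' - s| := by rw [abs_sub_comm]; ring
    have ht1 : (z' - μ') ^ 2 * (1 / (2 * s' ^ 2) - 1 / (2 * s ^ 2))
        ≤ (2 * b) ^ 2 * b ^ 3 * |s' - s| := by
      calc (z' - μ') ^ 2 * (1 / (2 * s' ^ 2) - 1 / (2 * s ^ 2))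
          ≤ (z' - μ') ^ 2 * |1 / (2 * s' ^ 2) - 1 / (2 * s ^ 2)| :=
            mul_le_mul_of_nonneg_left (le_abs_self _) (sq_nonneg _)
        _ ≤ (2 * b) ^ 2 * (b ^ 3 * |s' - s|) :=
            mul_le_mul hzμ' hA (abs_nonneg _) (by positivity)
        _ = (2 * b) ^ 2 * b ^ 3 * |s' - s| := by ring
    -- term 2
    have hnum : (z' - μ') ^ 2 - (z - μ) ^ 2 ≤ 4 * b * (|μ' - μ| + |z' - z|) := by
      have hid2 : (z' - μ') ^ 2 - (z - μ) ^ 2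
          = ((z' - μ') + (z - μ)) * ((z' - z) - (μ' - μ)) := by ring
      rw [hid2]
      calc ((z' - μ') + (z - μ)) * ((z' - z) - (μ' - μ))
          ≤ |((z' - μ') + (z - μ)) * ((z' - z) - (μ' - μ))| := le_abs_self _
        _ = |(z' - μ') + (z - μ)| * |(z' - z) - (μ' - μ)| := abs_mul _ _
        _ ≤ (4 * b) * (|z' - z| + |μ' - μ|) := by
            apply mul_le_mul _ (abs_sub _ _) (abs_nonneg _) (by positivity)
            calc |(z' - μ') + (z - μ)| ≤ |z' - μ'| + |z - μ| := abs_add_le _ _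
              _ ≤ (|z'| + |μ'|) + (|z| + |μ|) := add_le_add (abs_sub _ _) (abs_sub _ _)
              _ ≤ 4 * b := by linarith
        _ = 4 * b * (|μ' - μ| + |z' - z|) := by ring
    have ht2 : ((z' - μ') ^ 2 - (z - μ) ^ 2) / (2 * s ^ 2)
        ≤ 2 * b * b ^ 2 * (|μ' - μ| + |z' - z|) := by
      have hN : (0:ℝ) ≤ 4 * b * (|μ' - μ| + |z' - z|) := by positivity
      have h6 : ((z' - μ') ^ 2 - (z - μ) ^ 2) / (2 * s ^ 2)
          ≤ (4 * b * (|μ' - μ| + |z' - z|)) / (2 * s ^ 2) := by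
        gcongr
      have hsmall : 1 / (2 * s ^ 2) ≤ b ^ 2 / 2 := by
        rw [div_le_div_iff₀ (by positivity) (by norm_num)]
        nlinarith [sq_nonneg (b * s - 1)]
      have h7 : (4 * b * (|μ' - μ| + |z' - z|)) / (2 * s ^ 2)
          ≤ (4 * b * (|μ' - μ| + |z' - z|)) * (b ^ 2 / 2) := by
        rw [div_eq_mul_one_div]
        exact mul_le_mul_of_nonneg_left hsmall hN
      calc ((z' - μ') ^ 2 - (z - μ) ^ 2) / (2 * s ^ 2)
          ≤ (4 * b * (|μ' - μ| + |z' - z|)) * (b ^ 2 / 2) := le_trans h6 h7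
        _ = 2 * b * b ^ 2 * (|μ' - μ| + |z' - z|) := by ring
    linarith [hid ▸ add_le_add ht1 ht2]
  linarith

lemma layer_bound {e : ℕ} (δ L₂ b : ℝ) (hδ : 0 ≤ δ) (hL₂ : 0 ≤ L₂) (hb : 0 < b)
    (z z' μ μ' s s' : EuclideanSpace ℝ (Fin e))
    (hz : ∀ j, |z j| ≤ b) (hz' : ∀ j, |z' j| ≤ b)
    (hμ : ∀ j, |μ j| ≤ b) (hμ' : ∀ j, |μ' j| ≤ b)
    (hs : ∀ j, 1 / b ≤ s j) (hs' : ∀ j, 1 / b ≤ s' j)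
    (hzd : ‖z' - z‖ ≤ δ) (hμd : ‖μ' - μ‖ ≤ L₂ * δ) (hsd : ‖s' - s‖ ≤ L₂ * δ) :
    -gaussLogDensity e z' μ' s' - (-gaussLogDensity e z μ s) ≤
      δ * Real.sqrt e * (L₂ * ((2 * b) ^ 2 * b ^ 3 + 2 * b * b ^ 2 + b) + 2 * b * b ^ 2) := by
  set C1 := (2 * b) ^ 2 * b ^ 3 + b with hC1def
  set C2 := 2 * b * b ^ 2 with hC2def
  have hC1 : (0:ℝ) ≤ C1 := by rw [hC1def]; positivity
  have hC2 : (0:ℝ) ≤ C2 := by rw [hC2def]; positivity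
  have hsq : (0:ℝ) ≤ Real.sqrt e := Real.sqrt_nonneg _
  have hsum_s : ∑ j, |s' j - s j| ≤ Real.sqrt e * (L₂ * δ) := by
    have h := sum_abs_le_sqrt_mul_norm (s' - s)
    have h2 : ∑ j, |s' j - s j| = ∑ j, |(s' - s) j| := by
      apply Finset.sum_congr rfl; intro j _; simp
    rw [h2]
    exact le_trans h (mul_le_mul_of_nonneg_left hsd hsq)
  have hsum_μ : ∑ j, |μ' j - μ j| ≤ Real.sqrt e * (L₂ * δ) := by
    have h := sum_abs_le_sqrt_mul_norm (μ' - μ)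
    have h2 : ∑ j, |μ' j - μ j| = ∑ j, |(μ' - μ) j| := by
      apply Finset.sum_congr rfl; intro j _; simp
    rw [h2]
    exact le_trans h (mul_le_mul_of_nonneg_left hμd hsq)
  have hsum_z : ∑ j, |z' j - z j| ≤ Real.sqrt e * δ := by
    have h := sum_abs_le_sqrt_mul_norm (z' - z)
    have h2 : ∑ j, |z' j - z j| = ∑ j, |(z' - z) j| := by
      apply Finset.sum_congr rfl; intro j _; simp
    rw [h2]
    exact le_trans h (mul_le_mul_of_nonneg_left hzd hsq)
  have hL : -gaussLogDensity e z' μ' s' - (-gaussLogDensity e z μ s)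
      = ∑ j, ((Real.log (s' j) + (z' j - μ' j) ^ 2 / (2 * (s' j) ^ 2))
        - (Real.log (s j) + (z j - μ j) ^ 2 / (2 * (s j) ^ 2))) := by
    simp only [gaussLogDensity, Finset.sum_sub_distrib, Finset.sum_add_distrib]
    ring
  have key : ∑ j, ((Real.log (s' j) + (z' j - μ' j) ^ 2 / (2 * (s' j) ^ 2))
        - (Real.log (s j) + (z j - μ j) ^ 2 / (2 * (s j) ^ 2)))
      ≤ ∑ j, (C1 * |s' j - s j| + C2 * (|μ' j - μ j| + |z' j - z j|)) :=
    Finset.sum_le_sum fun j _ =>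
      coord_bound b (z j) (z' j) (μ j) (μ' j) (s j) (s' j) hb
        (hz j) (hz' j) (hμ j) (hμ' j) (hs j) (hs' j)
  have hre : ∑ j, (C1 * |s' j - s j| + C2 * (|μ' j - μ j| + |z' j - z j|))
      = C1 * ∑ j, |s' j - s j|
        + C2 * (∑ j, |μ' j - μ j| + ∑ j, |z' j - z j|) := by
    rw [Finset.sum_add_distrib, ← Finset.mul_sum, ← Finset.mul_sum,
      Finset.sum_add_distrib]
  rw [hL]
  calc ∑ j, ((Real.log (s' j) + (z' j - μ' j) ^ 2 / (2 * (s' j) ^ 2))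
        - (Real.log (s j) + (z j - μ j) ^ 2 / (2 * (s j) ^ 2)))
      ≤ C1 * ∑ j, |s' j - s j|
        + C2 * (∑ j, |μ' j - μ j| + ∑ j, |z' j - z j|) := le_trans key (le_of_eq hre)
    _ ≤ C1 * (Real.sqrt e * (L₂ * δ))
        + C2 * (Real.sqrt e * (L₂ * δ) + Real.sqrt e * δ) := by
        apply add_le_add (mul_le_mul_of_nonneg_left hsum_s hC1)
        exact mul_le_mul_of_nonneg_left (add_le_add hsum_μ hsum_z) hC2
    _ = δ * Real.sqrt e * (L₂ * ((2 * b) ^ 2 * b ^ 3 + 2 * b * b ^ 2 + b) + 2 * b * b ^ 2) := by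
        rw [hC1def, hC2def]; ring

/-- **Theorem 1, architectural robustness of the multi-scale flow.**
The negative log-likelihood
`NLL(u) = ∑ᵢ −ℓ(Zᵢ(u); μᵢ(Yᵢ(u)), σᵢ(Yᵢ(u))) + ‖M(u)‖²/2 + (d/2)·log(2π)`
of a multi-scale flow with `k` factor-out layers (conditioning maps `Yᵢ` and latent maps
`Zᵢ` both `1`-Lipschitz, parameter networks `μᵢ, σᵢ` `L₂`-Lipschitz, main-flow `M`
`L₁`-Lipschitz) increases under a perturbation `‖x − x⋆‖₂ ≤ δ` by at most
`∑ᵢ δ·√dᵢ·(L₂·((2b)²b³ + 2b·b² + b) + 2b·b²) + L₁·δ·‖M(x)‖₂ + L₁²·δ²/2`. -/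
theorem multi_scale_flow_robustness
    (n k d : ℕ) (hn : 1 ≤ n)
    (m dim : Fin k → ℕ) (hm : ∀ i, 1 ≤ m i) (hdim : ∀ i, 1 ≤ dim i)
    (δ L₁ L₂ b : ℝ) (hδ : 0 ≤ δ) (hL₁ : 0 ≤ L₁) (hL₂ : 0 ≤ L₂) (hb : 0 < b)
    (x xstar : EuclideanSpace ℝ (Fin n)) (hx : ‖x - xstar‖ ≤ δ)
    (Y : ∀ i : Fin k, EuclideanSpace ℝ (Fin n) → EuclideanSpace ℝ (Fin (m i)))
    (Z : ∀ i : Fin k, EuclideanSpace ℝ (Fin n) → EuclideanSpace ℝ (Fin (dim i)))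
    (hY : ∀ i, ∀ u v : EuclideanSpace ℝ (Fin n), ‖Y i u - Y i v‖ ≤ ‖u - v‖)
    (hZ : ∀ i, ∀ u v : EuclideanSpace ℝ (Fin n), ‖Z i u - Z i v‖ ≤ ‖u - v‖)
    (μ σ : ∀ i : Fin k, EuclideanSpace ℝ (Fin (m i)) → EuclideanSpace ℝ (Fin (dim i)))
    (hμlip : ∀ i, ∀ u v : EuclideanSpace ℝ (Fin (m i)), ‖μ i u - μ i v‖ ≤ L₂ * ‖u - v‖)
    (hσlip : ∀ i, ∀ u v : EuclideanSpace ℝ (Fin (m i)), ‖σ i u - σ i v‖ ≤ L₂ * ‖u - v‖)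
    (hZb : ∀ i j, |Z i x j| ≤ b ∧ |Z i xstar j| ≤ b)
    (hμb : ∀ i j, |μ i (Y i x) j| ≤ b ∧ |μ i (Y i xstar) j| ≤ b)
    (hσb : ∀ i j, 1 / b ≤ σ i (Y i x) j ∧ 1 / b ≤ σ i (Y i xstar) j)
    (M : EuclideanSpace ℝ (Fin n) → EuclideanSpace ℝ (Fin d))
    (hM : ∀ u v : EuclideanSpace ℝ (Fin n), ‖M u - M v‖ ≤ L₁ * ‖u - v‖)
    (NLL : EuclideanSpace ℝ (Fin n) → ℝ)
    (hNLL : ∀ u, NLL u =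
      (∑ i : Fin k, -gaussLogDensity (dim i) (Z i u) (μ i (Y i u)) (σ i (Y i u)))
        + ‖M u‖ ^ 2 / 2 + (d : ℝ) / 2 * Real.log (2 * Real.pi)) :
    NLL xstar - NLL x ≤
      (∑ i : Fin k, δ * Real.sqrt (dim i) *
          (L₂ * ((2 * b) ^ 2 * b ^ 3 + 2 * b * b ^ 2 + b) + 2 * b * b ^ 2))
        + L₁ * δ * ‖M x‖ + L₁ ^ 2 * δ ^ 2 / 2 := by
  have hx' : ‖xstar - x‖ ≤ δ := by rwa [norm_sub_rev]
  have hsum : ∑ i : Fin k,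
        (-gaussLogDensity (dim i) (Z i xstar) (μ i (Y i xstar)) (σ i (Y i xstar)))
      - ∑ i : Fin k,
        (-gaussLogDensity (dim i) (Z i x) (μ i (Y i x)) (σ i (Y i x)))
      ≤ ∑ i : Fin k, δ * Real.sqrt (dim i) *
          (L₂ * ((2 * b) ^ 2 * b ^ 3 + 2 * b * b ^ 2 + b) + 2 * b * b ^ 2) := by
    rw [← Finset.sum_sub_distrib]
    apply Finset.sum_le_sum
    intro i _
    have hYd : ‖Y i xstar - Y i x‖ ≤ δ := le_trans (hY i xstar x) hx'
    have hzd : ‖Z i xstar - Z i x‖ ≤ δ := le_trans (hZ i xstar x) hx'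
    have hμd : ‖μ i (Y i xstar) - μ i (Y i x)‖ ≤ L₂ * δ :=
      le_trans (hμlip i _ _) (mul_le_mul_of_nonneg_left hYd hL₂)
    have hσd : ‖σ i (Y i xstar) - σ i (Y i x)‖ ≤ L₂ * δ :=
      le_trans (hσlip i _ _) (mul_le_mul_of_nonneg_left hYd hL₂)
    exact layer_bound δ L₂ b hδ hL₂ hb
      (Z i x) (Z i xstar) (μ i (Y i x)) (μ i (Y i xstar))
      (σ i (Y i x)) (σ i (Y i xstar))
      (fun j => (hZb i j).1) (fun j => (hZb i j).2)
      (fun j => (hμb i j).1) (fun j => (hμb i j).2)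
      (fun j => (hσb i j).1) (fun j => (hσb i j).2)
      hzd hμd hσd
  have hMd : ‖M xstar‖ ≤ ‖M x‖ + L₁ * δ := by
    have h1 : ‖M xstar‖ ≤ ‖M x‖ + ‖M xstar - M x‖ := by
      have := norm_add_le (M x) (M xstar - M x)
      simpa using this
    have h2 : ‖M xstar - M x‖ ≤ L₁ * δ :=
      le_trans (hM xstar x) (mul_le_mul_of_nonneg_left hx' hL₁)
    linarith
  have hMsq : ‖M xstar‖ ^ 2 / 2 - ‖M x‖ ^ 2 / 2 ≤ L₁ * δ * ‖M x‖ + L₁ ^ 2 * δ ^ 2 / 2 := by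
    nlinarith [norm_nonneg (M xstar), norm_nonneg (M x), hMd,
      mul_nonneg hL₁ hδ]
  rw [hNLL xstar, hNLL x]
  linarith [hsum, hMsq]
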